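/- Let K : ℝ^d → [0,∞) be radially symmetric non-increasing with K ∈ L¹(B₁(0)) and K(x) → 0 as |x| → ∞, and let f ∈ L^1_+(ℝ^d) be radially symmetric non-increasing (hence f(x) → 0 as |x| → ∞). Then (K ∗ f)(x) → 0 as |x| → ∞. -/

import Mathlib

open MeasureTheory Filter ENNReal

private lemma lintegral_sub_left_eq (d : ℕ) (g : EuclideanSpace ℝ (Fin d) → ℝ≥0∞)
    (x : EuclideanSpace ℝ (Fin d)) : ∫⁻ y, g (x - y) = ∫⁻ y, g y := by
  have h2 : ∫⁻ y, g (x + -y) = ∫⁻ z, g (x + z) := by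
    conv_rhs => rw [← Measure.map_neg_eq_self (volume : Measure (EuclideanSpace ℝ (Fin d)))]
    exact (lintegral_map_equiv (fun z => g (x + z)) (MeasurableEquiv.neg _)).symm
  simp only [sub_eq_add_neg]
  rw [h2, lintegral_add_left_eq_self (fun z => g z) x]

/-- If `K ≥ 0` is radially non-increasing, locally integrable near the origin and
vanishing at infinity, and `f ≥ 0` is radially non-increasing and integrable, then the
convolution `K ∗ f` vanishes at infinity. -/
theorem convolution_tendsto_zero_at_infinity
    (d : ℕ) (K f : EuclideanSpace ℝ (Fin d) → ℝ)
    (hK0 : ∀ x, 0 ≤ K x)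
    (hK_rad : ∃ Kb : ℝ → ℝ, AntitoneOn Kb (Set.Ici 0) ∧ ∀ x, K x = Kb ‖x‖)
    (hKint : IntegrableOn K (Metric.ball (0 : EuclideanSpace ℝ (Fin d)) 1))
    (hKlim : Tendsto K (cocompact (EuclideanSpace ℝ (Fin d))) (nhds 0))
    (hf0 : ∀ x, 0 ≤ f x) (hfi : Integrable f)
    (hf_rad : ∃ F : ℝ → ℝ, AntitoneOn F (Set.Ici 0) ∧ ∀ x, f x = F ‖x‖) :
    Tendsto (fun x : EuclideanSpace ℝ (Fin d) => ∫⁻ y, ENNReal.ofReal (K (x - y) * f y))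
      (cocompact (EuclideanSpace ℝ (Fin d))) (nhds 0) := by
  rcases Nat.eq_zero_or_pos d with hd | hd
  · subst hd
    haveI : Subsingleton (EuclideanSpace ℝ (Fin 0)) :=
      inferInstanceAs (Subsingleton (PiLp 2 fun _ : Fin 0 => ℝ))
    haveI : Finite (EuclideanSpace ℝ (Fin 0)) := Finite.of_subsingleton
    haveI : CompactSpace (EuclideanSpace ℝ (Fin 0)) := Finite.compactSpace
    rw [Filter.cocompact_eq_bot]
    exact tendsto_bot
  obtain ⟨Kb, hKb, hKeq⟩ := hK_rad
  obtain ⟨F, hF, hFeq⟩ := hf_rad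
  -- a unit vector
  set u : EuclideanSpace ℝ (Fin d) := EuclideanSpace.single (⟨0, hd⟩ : Fin d) (1 : ℝ) with hu_def
  have hu : ‖u‖ = 1 := by rw [hu_def, EuclideanSpace.norm_single]; norm_num
  haveI : Nontrivial (EuclideanSpace ℝ (Fin d)) := ⟨⟨0, u, by
    intro h; rw [← h] at hu; simp at hu⟩⟩
  have hnorm_smul : ∀ r : ℝ, 0 ≤ r → ‖r • u‖ = r := by
    intro r hr; rw [norm_smul, hu, mul_one, Real.norm_eq_abs, abs_of_nonneg hr]
  have hKb0 : ∀ r : ℝ, 0 ≤ r → 0 ≤ Kb r := by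
    intro r hr
    have := hK0 (r • u); rwa [hKeq, hnorm_smul r hr] at this
  have hF0 : ∀ r : ℝ, 0 ≤ r → 0 ≤ F r := by
    intro r hr
    have := hf0 (r • u); rwa [hFeq, hnorm_smul r hr] at this
  set g : EuclideanSpace ℝ (Fin d) → ℝ≥0∞ := fun y => ENNReal.ofReal (f y) with hg_def
  set kg : EuclideanSpace ℝ (Fin d) → ℝ≥0∞ := fun z => ENNReal.ofReal (K z) with hkg_def
  have hg_eq : ∀ y, (‖f y‖₊ : ℝ≥0∞) = g y := by
    intro y
    rw [hg_def, ← enorm_eq_nnnorm, ← ofReal_norm, Real.norm_eq_abs, abs_of_nonneg (hf0 y)]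
  set C₂ : ℝ≥0∞ := ∫⁻ y, g y with hC₂_def
  have hC₂ : C₂ ≠ ∞ := by
    have h1 : (∫⁻ y, (‖f y‖₊ : ℝ≥0∞)) < ∞ := hfi.2
    rw [hC₂_def, ← lintegral_congr hg_eq]
    exact h1.ne
  set C₁ : ℝ≥0∞ := ∫⁻ z in Metric.ball (0 : EuclideanSpace ℝ (Fin d)) 1, kg z with hC₁_def
  have hC₁ : C₁ ≠ ∞ := by
    have h1 : (∫⁻ z in Metric.ball (0 : EuclideanSpace ℝ (Fin d)) 1, (‖K z‖₊ : ℝ≥0∞)) < ∞ :=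
      hKint.2
    have h2 : (∫⁻ z in Metric.ball (0 : EuclideanSpace ℝ (Fin d)) 1, kg z) =
        ∫⁻ z in Metric.ball (0 : EuclideanSpace ℝ (Fin d)) 1, (‖K z‖₊ : ℝ≥0∞) := by
      refine setLIntegral_congr_fun measurableSet_ball (fun z _ => ?_)
      rw [hkg_def, ← enorm_eq_nnnorm, ← ofReal_norm, Real.norm_eq_abs, abs_of_nonneg (hK0 z)]
    rw [hC₁_def, h2]
    exact h1.ne
  -- the tail integral
  set T : ℝ → ℝ≥0∞ :=
    fun R => ∫⁻ y in (Metric.closedBall (0 : EuclideanSpace ℝ (Fin d)) R)ᶜ, g y with hT_def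
  have hTanti : Antitone T := by
    intro R S hRS
    exact lintegral_mono' (Measure.restrict_mono
      (Set.compl_subset_compl.2 (Metric.closedBall_subset_closedBall hRS)) le_rfl) le_rfl
  have hg_meas : AEMeasurable g := (hfi.aemeasurable).ennreal_ofReal
  have hTn : Tendsto (fun n : ℕ => T n) atTop (nhds 0) := by
    have key : Tendsto (fun n : ℕ =>
        ∫⁻ y, ((Metric.closedBall (0 : EuclideanSpace ℝ (Fin d)) n)ᶜ).indicator g y)
        atTop (nhds (∫⁻ _y : EuclideanSpace ℝ (Fin d), (0 : ℝ≥0∞))) := by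
      apply tendsto_lintegral_of_dominated_convergence' g
        (fun n => hg_meas.indicator measurableSet_closedBall.compl)
        (fun n => ae_of_all _ fun y => Set.indicator_le_self _ _ y)
        (by rw [← hC₂_def]; exact hC₂)
      refine ae_of_all _ fun y => ?_
      have hev : ∀ᶠ n : ℕ in atTop,
          ((Metric.closedBall (0 : EuclideanSpace ℝ (Fin d)) n)ᶜ).indicator g y = 0 := by
        filter_upwards [eventually_ge_atTop ⌈‖y‖⌉₊] with n hn
        have hmem : y ∈ Metric.closedBall (0 : EuclideanSpace ℝ (Fin d)) n := by
          rw [Metric.mem_closedBall, dist_zero_right]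
          exact le_trans (Nat.le_ceil _) (by exact_mod_cast hn)
        simp [Set.indicator_of_notMem, hmem]
      exact Tendsto.congr' (hev.mono fun n hn => hn.symm) tendsto_const_nhds
    simp only [lintegral_zero] at key
    refine key.congr fun n => ?_
    rw [lintegral_indicator measurableSet_closedBall.compl]
  have hT : Tendsto T atTop (nhds 0) := by
    rw [ENNReal.tendsto_nhds_zero]
    intro ε hε
    rw [ENNReal.tendsto_nhds_zero] at hTn
    obtain ⟨N, hN⟩ := (hTn ε hε).exists
    filter_upwards [eventually_ge_atTop (N : ℝ)] with R hR
    exact le_trans (hTanti hR) hN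
  -- limits of the radial profiles
  have htop : Tendsto (fun x : EuclideanSpace ℝ (Fin d) => ‖x‖ / 2)
      (cocompact (EuclideanSpace ℝ (Fin d))) atTop :=
    (tendsto_norm_cocompact_atTop).atTop_div_const two_pos
  have hKbl : Tendsto Kb atTop (nhds 0) := by
    have hv : Tendsto (fun r : ℝ => r • u) atTop (cocompact (EuclideanSpace ℝ (Fin d))) := by
      rw [← Metric.cobounded_eq_cocompact, ← tendsto_norm_atTop_iff_cobounded]
      apply tendsto_atTop_mono' _ _ tendsto_id
      filter_upwards [eventually_ge_atTop (0:ℝ)] with r hr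
      simp [hnorm_smul r hr]
    have hcomp := hKlim.comp hv
    refine hcomp.congr' ?_
    filter_upwards [eventually_ge_atTop (0:ℝ)] with r hr
    simp [Function.comp, hKeq, hnorm_smul r hr]
  have hFl : Tendsto F atTop (nhds 0) := by
    rw [NormedAddCommGroup.tendsto_nhds_zero]
    intro ε hε
    have hex : ∃ r : ℝ, 0 ≤ r ∧ F r < ε := by
      by_contra h
      push_neg at h
      have hfe : ∀ y : EuclideanSpace ℝ (Fin d), ε ≤ f y := by
        intro y; rw [hFeq]; exact h _ (norm_nonneg y)
      have hle : (ENNReal.ofReal ε) * volume (Set.univ : Set (EuclideanSpace ℝ (Fin d))) ≤ C₂ := by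
        rw [hC₂_def, ← lintegral_const]
        exact lintegral_mono fun y => ENNReal.ofReal_le_ofReal (hfe y)
      rw [measure_univ_of_isAddLeftInvariant, ENNReal.mul_top
        (ENNReal.ofReal_pos.mpr hε).ne'] at hle
      exact hC₂ (top_le_iff.mp hle)
    obtain ⟨r, hr0, hr⟩ := hex
    filter_upwards [eventually_ge_atTop r] with s hs
    have hs0 : (0:ℝ) ≤ s := le_trans hr0 hs
    have h1 : F s ≤ F r := hF hr0 hs0 hs
    have h2 : 0 ≤ F s := hF0 s hs0
    rw [Real.norm_eq_abs, abs_of_nonneg h2]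
    exact lt_of_le_of_lt h1 hr
  -- the main pointwise bound
  have key : ∀ x : EuclideanSpace ℝ (Fin d), (∫⁻ y, ENNReal.ofReal (K (x - y) * f y)) ≤
      ENNReal.ofReal (Kb (‖x‖ / 2)) * C₂ +
        (ENNReal.ofReal (F (‖x‖ / 2)) * C₁ + ENNReal.ofReal (Kb 1) * T (‖x‖ / 2)) := by
    intro x
    set R : ℝ := ‖x‖ / 2 with hR_def
    have hR : 0 ≤ R := by positivity
    set A : Set (EuclideanSpace ℝ (Fin d)) := Metric.closedBall 0 R with hA_def
    have hA : MeasurableSet A := measurableSet_closedBall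
    rw [← lintegral_add_compl (fun y => ENNReal.ofReal (K (x - y) * f y)) hA]
    gcongr ?_ + ?_
    · -- inner piece : |y| ≤ R
      calc ∫⁻ y in A, ENNReal.ofReal (K (x - y) * f y)
          ≤ ∫⁻ y in A, ENNReal.ofReal (Kb R) * g y := by
            refine setLIntegral_mono' hA fun y hy => ?_
            have hyR : ‖y‖ ≤ R := by
              rw [hA_def, Metric.mem_closedBall, dist_zero_right] at hy; exact hy
            have hxy : R ≤ ‖x - y‖ := by
              have h1 : ‖x‖ - ‖y‖ ≤ ‖x - y‖ := norm_sub_norm_le x y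
              have h2 : ‖x‖ = 2 * R := by rw [hR_def]; ring
              nlinarith
            have hK_le : K (x - y) ≤ Kb R := by
              rw [hKeq]
              exact hKb hR (le_trans hR hxy) hxy
            calc ENNReal.ofReal (K (x - y) * f y) ≤ ENNReal.ofReal (Kb R * f y) :=
                  ENNReal.ofReal_le_ofReal (mul_le_mul_of_nonneg_right hK_le (hf0 y))
              _ = ENNReal.ofReal (Kb R) * g y := ENNReal.ofReal_mul (hKb0 R hR)
        _ = ENNReal.ofReal (Kb R) * ∫⁻ y in A, g y :=
            lintegral_const_mul' _ _ ENNReal.ofReal_ne_top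
        _ ≤ ENNReal.ofReal (Kb R) * C₂ :=
            mul_le_mul_right (setLIntegral_le_lintegral _ _) _
    · -- outer piece : |y| > R, split on |x - y| < 1
      set B : Set (EuclideanSpace ℝ (Fin d)) := Metric.ball x 1 with hB_def
      have hB : MeasurableSet B := measurableSet_ball
      rw [← lintegral_add_compl (fun y => ENNReal.ofReal (K (x - y) * f y)) hB
        (μ := volume.restrict Aᶜ)]
      gcongr ?_ + ?_
      · -- near x
        rw [Measure.restrict_restrict hB]
        calc ∫⁻ y in B ∩ Aᶜ, ENNReal.ofReal (K (x - y) * f y)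
            ≤ ∫⁻ y in B ∩ Aᶜ, kg (x - y) * ENNReal.ofReal (F R) := by
              refine setLIntegral_mono' (hB.inter hA.compl) fun y hy => ?_
              have hyR : R < ‖y‖ := by
                have h2 := hy.2
                rw [hA_def, Set.mem_compl_iff, Metric.mem_closedBall, dist_zero_right] at h2
                exact lt_of_not_ge h2
              have hf_le : f y ≤ F R := by
                rw [hFeq]
                exact hF hR (le_trans hR hyR.le) hyR.le
              calc ENNReal.ofReal (K (x - y) * f y) ≤ ENNReal.ofReal (K (x - y) * F R) :=
                    ENNReal.ofReal_le_ofReal (mul_le_mul_of_nonneg_left hf_le (hK0 _))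
                _ = kg (x - y) * ENNReal.ofReal (F R) := ENNReal.ofReal_mul (hK0 _)
          _ = (∫⁻ y in B ∩ Aᶜ, kg (x - y)) * ENNReal.ofReal (F R) :=
              lintegral_mul_const' _ _ ENNReal.ofReal_ne_top
          _ ≤ (∫⁻ y in B, kg (x - y)) * ENNReal.ofReal (F R) := by
              gcongr
              exact Set.inter_subset_left
          _ = C₁ * ENNReal.ofReal (F R) := by
              congr 1
              have hind : ∀ y : EuclideanSpace ℝ (Fin d),
                  B.indicator (fun y => kg (x - y)) y =
                  (Metric.ball (0 : EuclideanSpace ℝ (Fin d)) 1).indicator kg (x - y) := by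
                intro y
                have hmem : y ∈ B ↔ x - y ∈ Metric.ball (0 : EuclideanSpace ℝ (Fin d)) 1 := by
                  rw [hB_def, Metric.mem_ball, mem_ball_zero_iff, dist_comm, dist_eq_norm]
                by_cases hy : y ∈ B
                · rw [Set.indicator_of_mem hy, Set.indicator_of_mem (hmem.1 hy)]
                · rw [Set.indicator_of_notMem hy,
                    Set.indicator_of_notMem (fun h => hy (hmem.2 h))]
              calc ∫⁻ y in B, kg (x - y)
                  = ∫⁻ y, B.indicator (fun y => kg (x - y)) y := (lintegral_indicator hB _).symm
                _ = ∫⁻ y, (Metric.ball (0 : EuclideanSpace ℝ (Fin d)) 1).indicator kg (x - y) :=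
                    lintegral_congr hind
                _ = ∫⁻ z, (Metric.ball (0 : EuclideanSpace ℝ (Fin d)) 1).indicator kg z :=
                    lintegral_sub_left_eq d _ x
                _ = C₁ := lintegral_indicator measurableSet_ball _
          _ = ENNReal.ofReal (F R) * C₁ := mul_comm _ _
      · -- far from x
        rw [Measure.restrict_restrict hB.compl]
        calc ∫⁻ y in Bᶜ ∩ Aᶜ, ENNReal.ofReal (K (x - y) * f y)
            ≤ ∫⁻ y in Bᶜ ∩ Aᶜ, ENNReal.ofReal (Kb 1) * g y := by
              refine setLIntegral_mono' (hB.compl.inter hA.compl) fun y hy => ?_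
              have hxy : (1:ℝ) ≤ ‖x - y‖ := by
                have h1 := hy.1
                rw [hB_def, Set.mem_compl_iff, Metric.mem_ball] at h1
                rw [← dist_eq_norm, dist_comm]
                exact not_lt.1 h1
              have hK_le : K (x - y) ≤ Kb 1 := by
                rw [hKeq]
                exact hKb (by norm_num) (le_trans zero_le_one hxy) hxy
              calc ENNReal.ofReal (K (x - y) * f y) ≤ ENNReal.ofReal (Kb 1 * f y) :=
                    ENNReal.ofReal_le_ofReal (mul_le_mul_of_nonneg_right hK_le (hf0 y))
                _ = ENNReal.ofReal (Kb 1) * g y := ENNReal.ofReal_mul (hKb0 1 zero_le_one)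
          _ = ENNReal.ofReal (Kb 1) * ∫⁻ y in Bᶜ ∩ Aᶜ, g y :=
              lintegral_const_mul' _ _ ENNReal.ofReal_ne_top
          _ ≤ ENNReal.ofReal (Kb 1) * T R := by
              gcongr
              exact lintegral_mono' (Measure.restrict_mono Set.inter_subset_right le_rfl) le_rfl
  -- combine
  have hφ : Tendsto (fun x : EuclideanSpace ℝ (Fin d) => ENNReal.ofReal (Kb (‖x‖ / 2)) * C₂ +
      (ENNReal.ofReal (F (‖x‖ / 2)) * C₁ + ENNReal.ofReal (Kb 1) * T (‖x‖ / 2)))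
      (cocompact (EuclideanSpace ℝ (Fin d))) (nhds 0) := by
    have h1 : Tendsto (fun x : EuclideanSpace ℝ (Fin d) => ENNReal.ofReal (Kb (‖x‖ / 2)) * C₂)
        (cocompact (EuclideanSpace ℝ (Fin d))) (nhds 0) := by
      have := ENNReal.Tendsto.mul_const (ENNReal.tendsto_ofReal (hKbl.comp htop))
        (Or.inr hC₂)
      simpa using this
    have h2 : Tendsto (fun x : EuclideanSpace ℝ (Fin d) => ENNReal.ofReal (F (‖x‖ / 2)) * C₁)
        (cocompact (EuclideanSpace ℝ (Fin d))) (nhds 0) := by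
      have := ENNReal.Tendsto.mul_const (ENNReal.tendsto_ofReal (hFl.comp htop))
        (Or.inr hC₁)
      simpa using this
    have h3 : Tendsto (fun x : EuclideanSpace ℝ (Fin d) => ENNReal.ofReal (Kb 1) * T (‖x‖ / 2))
        (cocompact (EuclideanSpace ℝ (Fin d))) (nhds 0) := by
      have := ENNReal.Tendsto.const_mul (a := ENNReal.ofReal (Kb 1)) (hT.comp htop)
        (Or.inr ENNReal.ofReal_ne_top)
      simpa using this
    simpa using h1.add (h2.add h3)
  exact tendsto_of_tendsto_of_tendsto_of_le_of_le tendsto_const_nhds hφ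
    (fun x => bot_le) key
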